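/- The linear map i₁₂ : Ṽ → V ⊗ V is surjective; consequently its kernel I₁₂ = ker i₁₂ has finrank 80. -/

import Mathlib

open TensorProduct

variable (K V : Type*) [Field K] [AddCommGroup V] [Module K V]

-- Helper instances (the canonical tensor product instances; registering them here merely
-- speeds up instance search, which otherwise gets lost unfolding `⋀[K]^n V`).
noncomputable instance : AddCommGroup (↥(⋀[K]^2 V) ⊗[K] Module.Dual K V) :=
  TensorProduct.addCommGroup

noncomputable instance : AddCommGroup (V ⊗[K] (↥(⋀[K]^2 V) ⊗[K] Module.Dual K V)) :=
  TensorProduct.addCommGroup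

noncomputable instance : AddCommGroup (↥(⋀[K]^3 V) ⊗[K] Module.Dual K V) :=
  TensorProduct.addCommGroup

/-- The wedge `q ∧ r` of two vectors, as an element of the second exterior power. -/
def wedge2 (q r : V) : ⋀[K]^2 V :=
  ⟨ExteriorAlgebra.ιMulti K 2 ![q, r],
    ExteriorAlgebra.ιMulti_range K 2 (Set.mem_range_self _)⟩

/-- The wedge `p ∧ q ∧ r` of three vectors, as an element of the third exterior power. -/
def wedge3 (p q r : V) : ⋀[K]^3 V :=
  ⟨ExteriorAlgebra.ιMulti K 3 ![p, q, r],
    ExteriorAlgebra.ιMulti_range K 3 (Set.mem_range_self _)⟩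

lemma wedge2_val (q r : V) : (wedge2 K V q r : ExteriorAlgebra K V) =
    ExteriorAlgebra.ι K q * ExteriorAlgebra.ι K r := by
  simp [wedge2, ExteriorAlgebra.ιMulti_apply, List.ofFn_succ]

lemma iMulti_two (v : Fin 2 → V) : ExteriorAlgebra.ιMulti K 2 v =
    ExteriorAlgebra.ι K (v 0) * ExteriorAlgebra.ι K (v 1) := by
  simp [ExteriorAlgebra.ιMulti_apply, List.ofFn_succ, Matrix.vecTail]

-- spanning: ambient submodule generated by basis wedges contains ⋀²
section
variable {K V}
lemma mem_span_wedges (b : Module.Basis (Fin 4) K V) (x : ⋀[K]^2 V) :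
    x ∈ Submodule.span K (Set.range fun p : {p : Fin 4 × Fin 4 // p.1 < p.2} =>
      wedge2 K V (b p.1.1) (b p.1.2)) := by
  set S := Submodule.span K (Set.range fun p : {p : Fin 4 × Fin 4 // p.1 < p.2} =>
      wedge2 K V (b p.1.1) (b p.1.2)) with hS
  -- ambient span
  set T : Submodule K (ExteriorAlgebra K V) := Submodule.span K
      (Set.range fun p : {p : Fin 4 × Fin 4 // p.1 < p.2} =>
        ExteriorAlgebra.ι K (b p.1.1) * ExteriorAlgebra.ι K (b p.1.2)) with hT
  have hbb : ∀ i j : Fin 4, ExteriorAlgebra.ι K (b i) * ExteriorAlgebra.ι K (b j) ∈ T := by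
    intro i j
    rcases lt_trichotomy i j with h | h | h
    · exact Submodule.subset_span ⟨⟨(i, j), h⟩, rfl⟩
    · subst h; rw [ExteriorAlgebra.ι_sq_zero]; exact T.zero_mem
    · have := ExteriorAlgebra.ι_add_mul_swap (R := K) (b j) (b i)
      have h2 : ExteriorAlgebra.ι K (b i) * ExteriorAlgebra.ι K (b j)
          = -(ExteriorAlgebra.ι K (b j) * ExteriorAlgebra.ι K (b i)) :=
        eq_neg_of_add_eq_zero_right this
      rw [h2]
      exact T.neg_mem (Submodule.subset_span ⟨⟨(j, i), h⟩, rfl⟩)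
  have hwedge : ∀ q r : V, ExteriorAlgebra.ι K q * ExteriorAlgebra.ι K r ∈ T := by
    intro q r
    rw [← Module.Basis.sum_repr b q, ← Module.Basis.sum_repr b r]
    rw [map_sum, map_sum, Finset.sum_mul]
    refine Submodule.sum_mem T fun i _ => ?_
    rw [Finset.mul_sum]
    refine Submodule.sum_mem T fun j _ => ?_
    rw [map_smul, map_smul, smul_mul_assoc, mul_smul_comm]
    exact T.smul_mem _ (T.smul_mem _ (hbb i j))
  have hsub : (⋀[K]^2 V : Submodule K (ExteriorAlgebra K V)) ≤ T := by
    rw [← ExteriorAlgebra.ιMulti_span_fixedDegree]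
    rw [Submodule.span_le]
    rintro _ ⟨v, rfl⟩
    rw [iMulti_two]
    exact hwedge _ _
  have hx : (x : ExteriorAlgebra K V) ∈ T := hsub x.2
  -- pull back along subtype
  have himg : T = Submodule.map (⋀[K]^2 V).subtype
      (Submodule.span K (Set.range fun p : {p : Fin 4 × Fin 4 // p.1 < p.2} =>
        wedge2 K V (b p.1.1) (b p.1.2))) := by
    rw [Submodule.map_span, ← Set.range_comp]
    exact congrArg (Submodule.span K)
      (congrArg Set.range (funext fun p => (wedge2_val K V _ _).symm))
  rw [himg] at hx
  obtain ⟨y, hy, hval⟩ := hx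
  have hyx : y = x := Subtype.ext hval
  exact hyx ▸ hy
end

noncomputable def fij (b : Module.Basis (Fin 4) K V) (i j : Fin 4) : V [⋀^Fin 2]→ₗ[K] K :=
  (Matrix.detRowAlternating (n := Fin 2) (R := K)).compLinearMap
    (LinearMap.pi (fun k : Fin 2 => b.coord (![i, j] k)))

noncomputable def Fij (b : Module.Basis (Fin 4) K V) (i j : Fin 4) :
    ExteriorAlgebra K V →ₗ[K] K :=
  ExteriorAlgebra.liftAlternating
    (Function.update (fun n => (0 : V [⋀^Fin n]→ₗ[K] K)) 2 (fij K V b i j))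

lemma Fij_wedge (b : Module.Basis (Fin 4) K V) (i j : Fin 4) (q r : V) :
    Fij K V b i j (wedge2 K V q r : ExteriorAlgebra K V) = fij K V b i j ![q, r] := by
  show Fij K V b i j (ExteriorAlgebra.ιMulti K 2 ![q, r]) = _
  rw [Fij, ExteriorAlgebra.liftAlternating_apply_ιMulti, Function.update_self]

lemma fij_basis (b : Module.Basis (Fin 4) K V) (i j k l : Fin 4) :
    fij K V b i j ![b k, b l] =
      (if l = j ∧ k = i then 1 else 0) - (if l = i ∧ k = j then 1 else 0) := by
  change Matrix.det (Matrix.of fun a c => b.coord (![i, j] c) (![b k, b l] a)) = _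
  rw [Matrix.det_fin_two]
  simp [fij, Matrix.det_fin_two, Module.Basis.coord_apply, Module.Basis.repr_self,
    Finsupp.single_apply, ← ite_and]

section
variable {K V}
lemma wedges_indep (b : Module.Basis (Fin 4) K V) :
    LinearIndependent K (fun p : {p : Fin 4 × Fin 4 // p.1 < p.2} =>
      wedge2 K V (b p.1.1) (b p.1.2)) := by
  apply LinearIndependent.of_comp (⋀[K]^2 V).subtype
  rw [Fintype.linearIndependent_iff]
  intro g hg p
  obtain ⟨⟨i, j⟩, hij⟩ := p
  have key := congrArg (Fij K V b i j) hg
  rw [map_sum, map_zero] at key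
  simp only [Function.comp_apply, Submodule.coe_subtype, map_smul] at key
  rw [Finset.sum_eq_single (⟨(i, j), hij⟩ : {p : Fin 4 × Fin 4 // p.1 < p.2})] at key
  · rw [Fij_wedge, fij_basis] at key
    have h2 : ¬((j : Fin 4) = i ∧ (i : Fin 4) = j) := fun h => hij.ne h.2
    rw [if_pos ⟨rfl, rfl⟩, if_neg h2] at key
    simpa using key
  · rintro ⟨⟨k, l⟩, hkl⟩ _ hne
    rw [Fij_wedge, fij_basis]
    have h1 : ¬((l : Fin 4) = j ∧ (k : Fin 4) = i) := by
      rintro ⟨rfl, rfl⟩; exact hne rfl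
    have h2 : ¬((l : Fin 4) = i ∧ (k : Fin 4) = j) := by
      rintro ⟨rfl, rfl⟩; exact lt_asymm hij hkl
    rw [if_neg h1, if_neg h2, sub_zero, smul_zero]
  · intro h; exact absurd (Finset.mem_univ _) h
end

section
variable {K V}
lemma finrank_ext2 (hV : Module.finrank K V = 4) :
    Module.finrank K (⋀[K]^2 V) = 6 := by
  have : FiniteDimensional K V := FiniteDimensional.of_finrank_pos (by omega)
  let b := Module.finBasisOfFinrankEq K V hV
  have hspan : ⊤ ≤ Submodule.span K (Set.range fun p : {p : Fin 4 × Fin 4 // p.1 < p.2} =>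
      wedge2 K V (b p.1.1) (b p.1.2)) := fun x _ => mem_span_wedges b x
  let B := Module.Basis.mk (wedges_indep b) hspan
  rw [Module.finrank_eq_card_basis B]
  decide
end

/-- The 96-dimensional space `Ṽ = V ⊗ Λ²V ⊗ V*`. -/
abbrev FlagTensor := V ⊗[K] ↥(⋀[K]^2 V) ⊗[K] (Module.Dual K V)

/-- The linear map `i₁₂ : Ṽ → V ⊗ V`, `p ⊗ t ⊗ e* ↦ p ⊗ (t ⌟ e*)`, is surjective, and
consequently its kernel `I₁₂` has dimension `96 − 16 = 80`. Here the contraction by `e*`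
is given as a linear map `c e*` with `c e* (q ∧ r) = e*(q)·r − e*(r)·q`. -/
theorem i12_surjective_and_finrank_ker
    (hV : Module.finrank K V = 4)
    (c : Module.Dual K V → (↥(⋀[K]^2 V) →ₗ[K] V))
    (hc : ∀ (e : Module.Dual K V) (q r : V),
      c e (wedge2 K V q r) = e q • r - e r • q)
    (i12 : FlagTensor K V →ₗ[K] (V ⊗[K] V))
    (hi12 : ∀ (p : V) (t : ⋀[K]^2 V) (e : Module.Dual K V),
      i12 (p ⊗ₜ[K] t ⊗ₜ[K] e) = p ⊗ₜ[K] (c e t)) :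
    Function.Surjective i12 ∧ Module.finrank K (LinearMap.ker i12) = 80 := by
  have hfd : FiniteDimensional K V := FiniteDimensional.of_finrank_pos (by omega)
  have hsurj : Function.Surjective i12 := by
    rw [← LinearMap.range_eq_top, ← top_le_iff, ← TensorProduct.span_tmul_eq_top K V V,
      Submodule.span_le]
    rintro _ ⟨x, y, rfl⟩
    by_cases hy : y = 0
    · subst hy; rw [TensorProduct.tmul_zero]; exact (LinearMap.range i12).zero_mem
    · have hlt : Submodule.span K {y} < ⊤ := by
        rw [lt_top_iff_ne_top]
        intro h
        have h1 := finrank_span_singleton (K := K) hy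
        rw [h, finrank_top] at h1
        omega
      obtain ⟨e, he0, he⟩ := Submodule.exists_dual_map_eq_bot_of_lt_top hlt inferInstance
      have hey : e y = 0 := by
        have hm : e y ∈ Submodule.map e (Submodule.span K {y}) :=
          ⟨y, Submodule.mem_span_singleton_self y, rfl⟩
        rw [he] at hm; exact hm
      obtain ⟨q, hq⟩ : ∃ q, e q ≠ 0 := by
        by_contra h
        push_neg at h
        exact he0 (LinearMap.ext fun v => h v)
      refine ⟨(x ⊗ₜ wedge2 K V ((e q)⁻¹ • q) y) ⊗ₜ e, ?_⟩
      rw [hi12, hc]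
      rw [map_smul, hey, zero_smul, sub_zero, smul_eq_mul, inv_mul_cancel₀ hq, one_smul]
  refine ⟨hsurj, ?_⟩
  have h2 : FiniteDimensional K (⋀[K]^2 V) :=
    FiniteDimensional.of_finrank_pos (by rw [finrank_ext2 hV]; omega)
  have hft : Module.finrank K (FlagTensor K V) = 96 := by
    rw [Module.finrank_tensorProduct, Module.finrank_tensorProduct, finrank_ext2 hV,
      Subspace.dual_finrank_eq, hV]
  have hrn := LinearMap.finrank_range_add_finrank_ker i12
  rw [LinearMap.range_eq_top.2 hsurj, finrank_top, Module.finrank_tensorProduct, hV, hft] at hrn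
  omega
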